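/- For the min-plus (tropical) traffic matrix A of size n (with diagonal entries v, superdiagonal entries −σ, corner entry A_{n,1} = m − σ, all other entries +∞), the min-plus eigenvalue of A equals min(v, (m − nσ)/n). Precisely, with μ = min(v, (m−nσ)/n), there exists a vector x ∈ ℝ^n such that for every i, min_j (A_{ij} + x_j) = μ + x_i. -/
import Mathlib


theorem stmt_2 {n : ℕ} (hn : 1 ≤ n) (v σ m : ℝ) (hv : 0 < v) (hσ : 0 ≤ σ)
    (hnm : (n : ℝ) ≤ m)
    (A : Fin n → Fin n → EReal)
    (hdiag : ∀ i, A i i = (v : EReal))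
    (hsup : ∀ i : Fin n, ∀ h : (i : ℕ) + 1 < n, A i ⟨(i : ℕ) + 1, h⟩ = ((-σ : ℝ) : EReal))
    (hcorner : A ⟨n - 1, by omega⟩ ⟨0, by omega⟩ = ((m - σ : ℝ) : EReal))
    (hother : ∀ i j : Fin n, ¬ (j = i) → ¬ ((j : ℕ) = (i : ℕ) + 1) →
      ¬ ((i : ℕ) = n - 1 ∧ (j : ℕ) = 0) → A i j = (⊤ : EReal))
    (μ : ℝ) (hμ : μ = min v ((m - n * σ) / n)) :
    ∃ x : Fin n → ℝ, ∀ i : Fin n,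
      (⨅ j : Fin n, A i j + ((x j : ℝ) : EReal)) = ((μ : ℝ) : EReal) + (x i : ℝ) := by
  have hn0 : (0:ℝ) < n := by exact_mod_cast Nat.lt_of_lt_of_le Nat.zero_lt_one hn
  have hμv : μ ≤ v := hμ ▸ min_le_left _ _
  have hμd : μ ≤ (m - n * σ) / n := hμ ▸ min_le_right _ _
  have hμn : μ * n ≤ m - n * σ := (le_div_iff₀ hn0).mp hμd
  have hcast : ((n - 1 : ℕ) : ℝ) = (n : ℝ) - 1 := by
    push_cast [Nat.cast_sub hn]; ring
  have h0 : 0 < n := hn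
  have hn1 : n - 1 < n := Nat.sub_lt h0 Nat.one_pos
  refine ⟨fun i => (i : ℝ) * (μ + σ), fun i => ?_⟩
  apply le_antisymm
  · -- upper bound: pick a witness
    by_cases hi : (i : ℕ) + 1 < n
    · refine iInf_le_of_le ⟨(i : ℕ) + 1, hi⟩ ?_
      rw [hsup i hi]
      simp only [Fin.val_mk]
      rw [← EReal.coe_add, ← EReal.coe_add, EReal.coe_le_coe_iff]
      push_cast; ring_nf; nlinarith [i.2]
    · -- i is last index
      have hin : (i : ℕ) = n - 1 := by have := i.2; omega
      rcases le_total v ((m - n * σ) / n) with hc | hc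
      · have hμv' : μ = v := by rw [hμ, min_eq_left hc]
        refine iInf_le_of_le i ?_
        rw [hdiag i, ← EReal.coe_add, ← EReal.coe_add, EReal.coe_le_coe_iff, hμv']
      · have hμe : μ = (m - n * σ) / n := by rw [hμ, min_eq_right hc]
        have hμn' : μ * n = m - n * σ := by rw [hμe]; field_simp
        have hieq : i = ⟨n - 1, hn1⟩ := Fin.ext hin
        have hA : A i (⟨0, h0⟩ : Fin n) = ((m - σ : ℝ) : EReal) := by
          rw [hieq]; exact hcorner
        refine iInf_le_of_le ⟨0, h0⟩ ?_
        rw [hA]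
        simp only [Fin.val_mk]
        rw [← EReal.coe_add, ← EReal.coe_add, EReal.coe_le_coe_iff]
        simp only [hin, hcast]
        push_cast; nlinarith
  · refine le_iInf fun j => ?_
    by_cases h1 : j = i
    · subst h1
      rw [hdiag j, ← EReal.coe_add, ← EReal.coe_add, EReal.coe_le_coe_iff]
      nlinarith
    by_cases h2 : (j : ℕ) = (i : ℕ) + 1
    · have hi : (i : ℕ) + 1 < n := h2 ▸ j.2
      have hjeq : j = ⟨(i : ℕ) + 1, hi⟩ := Fin.ext h2
      have hA : A i j = ((-σ : ℝ) : EReal) := by rw [hjeq]; exact hsup i hi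
      rw [hA, ← EReal.coe_add, ← EReal.coe_add, EReal.coe_le_coe_iff]
      simp only [h2]
      push_cast; ring_nf; nlinarith
    by_cases h3 : (i : ℕ) = n - 1 ∧ (j : ℕ) = 0
    · obtain ⟨hi, hj⟩ := h3
      have hieq : i = ⟨n - 1, hn1⟩ := Fin.ext hi
      have hjeq : j = ⟨0, h0⟩ := Fin.ext hj
      have hA : A i j = ((m - σ : ℝ) : EReal) := by rw [hieq, hjeq]; exact hcorner
      rw [hA, ← EReal.coe_add, ← EReal.coe_add, EReal.coe_le_coe_iff]
      simp only [hi, hj, hcast]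
      push_cast; nlinarith
    · rw [hother i j h1 h2 h3, EReal.top_add_coe]
      exact le_top
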